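/- Let E'(r,t) denote the group of invertible elements of the monoid G'(r,t), i.e., the triples (x,y,z) with x a unit of ℤ/2^{r+1}. The map φ : E'(r,t) → (ℤ/2^{t+1})ˣ × (ℤ/2^{r+1})ˣ defined by φ(x,y,z) = (π(x) + μ(z), x) is a surjective group homomorphism whose kernel equals {(1,y,0) : y ∈ ℤ/2^{t+1}}, a cyclic subgroup of order 2^{t+1} generated by (1,1,0). Moreover, the subset H' = {(x,0,z) : x ∈ (ℤ/2^{r+1})ˣ, z ∈ ℤ/2^t} is a subgroup of E'(r,t) and φ restricted to H' is a group isomorphism onto (ℤ/2^{t+1})ˣ × (ℤ/2^{r+1})ˣ; in particular the short exact sequence ℤ/2^{t+1} ↪ E'(r,t) ↠ (ℤ/2^{t+1})ˣ × (ℤ/2^{r+1})ˣ splits. -/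

import Mathlib

/-- The composition law of `[C,C]` for the elementary Chang complex `C = C^{n+2,t}_r`
with `t < r`, in coordinates `ℤ/2^{r+1} × ℤ/2^{t+1} × ℤ/2^t`. -/
def changOp' (r t : ℕ) (htr : t ≤ r)
    (a b : ZMod (2 ^ (r + 1)) × ZMod (2 ^ (t + 1)) × ZMod (2 ^ t)) :
    ZMod (2 ^ (r + 1)) × ZMod (2 ^ (t + 1)) × ZMod (2 ^ t) :=
  (a.1 * b.1,
   ZMod.castHom (pow_dvd_pow 2 (by omega : t + 1 ≤ r + 1)) (ZMod (2 ^ (t + 1))) a.1 * b.2.1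
     + ZMod.castHom (pow_dvd_pow 2 (by omega : t + 1 ≤ r + 1)) (ZMod (2 ^ (t + 1))) b.1 * a.2.1
     + b.2.1 * (2 * (ZMod.cast a.2.2 : ZMod (2 ^ (t + 1)))),
   ZMod.castHom (pow_dvd_pow 2 (by omega : t ≤ r + 1)) (ZMod (2 ^ t)) a.1 * b.2.2
     + ZMod.castHom (pow_dvd_pow 2 (by omega : t ≤ r + 1)) (ZMod (2 ^ t)) b.1 * a.2.2
     + 2 * a.2.2 * b.2.2)

/-- The set `E'(r,t)` of invertible elements of the monoid `G'(r,t)`. -/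
def changE' (r t : ℕ) (htr : t ≤ r) :
    Set (ZMod (2 ^ (r + 1)) × ZMod (2 ^ (t + 1)) × ZMod (2 ^ t)) :=
  {a | ∃ b, changOp' r t htr a b = (1, 0, 0) ∧ changOp' r t htr b a = (1, 0, 0)}

/-- The map `φ(x,y,z) = (π(x) + μ(z), x)`. -/
def changPhi' (r t : ℕ) (htr : t ≤ r)
    (a : ZMod (2 ^ (r + 1)) × ZMod (2 ^ (t + 1)) × ZMod (2 ^ t)) :
    ZMod (2 ^ (t + 1)) × ZMod (2 ^ (r + 1)) :=
  (ZMod.castHom (pow_dvd_pow 2 (by omega : t + 1 ≤ r + 1)) (ZMod (2 ^ (t + 1))) a.1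
     + 2 * (ZMod.cast a.2.2 : ZMod (2 ^ (t + 1))),
   a.1)

/-- The subset `H' = {(x,0,z) : x a unit}`. -/
def changH' (r t : ℕ) :
    Set (ZMod (2 ^ (r + 1)) × ZMod (2 ^ (t + 1)) × ZMod (2 ^ t)) :=
  {a | IsUnit a.1 ∧ a.2.1 = 0}

instance pow2NeZero (k : ℕ) : NeZero ((2:ℕ)^k) := ⟨(pow_pos two_pos k).ne'⟩

lemma castHom_castHom' {a b c : ℕ} (hab : a ∣ b) (hbc : b ∣ c) [NeZero c] (x : ZMod c) :
    ZMod.castHom hab (ZMod a) (ZMod.castHom hbc (ZMod b) x)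
      = ZMod.castHom (hab.trans hbc) (ZMod a) x := by
  rw [← ZMod.natCast_zmod_val x]
  simp only [map_natCast]

lemma sigma_cast' {t : ℕ} (hd : (2:ℕ)^t ∣ 2^(t+1)) (z : ZMod (2^t)) :
    ZMod.castHom hd (ZMod (2^t)) (ZMod.cast z : ZMod (2^(t+1))) = z := by
  rw [ZMod.castHom_apply]
  exact ZMod.cast_cast_zmod_of_le (Nat.pow_le_pow_right two_pos (Nat.le_succ t)) z

lemma two_mul_eq' {t : ℕ} (hd : (2:ℕ)^t ∣ 2^(t+1)) {a b : ZMod (2^(t+1))}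
    (h : ZMod.castHom hd (ZMod (2^t)) a = ZMod.castHom hd (ZMod (2^t)) b) :
    2*a = 2*b := by
  have h0 : ZMod.castHom hd (ZMod (2^t)) (a - b) = 0 := by rw [map_sub, h, sub_self]
  rw [ZMod.castHom_apply, ← ZMod.natCast_val] at h0
  have h1 : (2:ℕ)^t ∣ (a-b).val := (ZMod.natCast_eq_zero_iff _ _).mp h0
  have h2 : ((2*(a-b).val : ℕ) : ZMod (2^(t+1))) = 0 := by
    rw [ZMod.natCast_eq_zero_iff]
    have := mul_dvd_mul_left 2 h1
    rwa [show 2*2^t = (2:ℕ)^(t+1) by ring] at this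
  rw [Nat.cast_mul, Nat.cast_ofNat, ZMod.natCast_zmod_val] at h2
  linear_combination h2

lemma mu_inj' {t : ℕ} {z z' : ZMod (2^t)}
    (h : 2*(ZMod.cast z : ZMod (2^(t+1))) = 2*(ZMod.cast z' : ZMod (2^(t+1)))) : z = z' := by
  have h2 : ((2*z.val : ℕ) : ZMod (2^(t+1))) = ((2*z'.val : ℕ) : ZMod (2^(t+1))) := by
    push_cast
    rw [ZMod.natCast_val, ZMod.natCast_val]
    exact h
  have hb : ∀ w : ZMod (2^t), 2*w.val < 2^(t+1) := fun w => by
    have h := ZMod.val_lt w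
    have h2 : (2:ℕ)^(t+1) = 2^t*2 := pow_succ 2 t
    omega
  have h3 := congrArg ZMod.val h2
  rw [ZMod.val_cast_of_lt (hb z), ZMod.val_cast_of_lt (hb z')] at h3
  have hv : z.val = z'.val := by omega
  rw [← ZMod.natCast_zmod_val z, ← ZMod.natCast_zmod_val z', hv]

lemma zmod2_eq_one' {w : ZMod 2} (h : IsUnit w) : w = 1 := by
  have h0 : w ≠ 0 := h.ne_zero
  have h1 : w.val < 2 := ZMod.val_lt w
  have h2 : w.val ≠ 0 := fun hv => h0 (by rw [← ZMod.natCast_zmod_val w, hv, Nat.cast_zero])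
  rw [← ZMod.natCast_zmod_val w, show w.val = 1 by omega, Nat.cast_one]

lemma two_dvd_val' {k : ℕ} (hk : k ≠ 0) {e : ZMod (2^k)}
    (he : ZMod.castHom (dvd_pow_self 2 hk) (ZMod 2) e = 0) : 2 ∣ e.val := by
  rw [ZMod.castHom_apply, ← ZMod.natCast_val] at he
  exact (ZMod.natCast_eq_zero_iff _ _).mp he

lemma isUnit_add_even' {k : ℕ} (hk : k ≠ 0) {u : ZMod (2^k)} (v : ZMod (2^k)) (hu : IsUnit u) :
    IsUnit (u + 2*v) := by
  have h1 : ZMod.castHom (dvd_pow_self 2 hk) (ZMod 2) (u + 2*v)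
      = ZMod.castHom (dvd_pow_self 2 hk) (ZMod 2) u := by
    rw [map_add, map_mul, map_ofNat, show ((2:ZMod 2)) = 0 by decide]
    ring
  rw [← ZMod.natCast_zmod_val (u+2*v), ZMod.isUnit_iff_coprime]
  apply Nat.Coprime.pow_right
  rw [Nat.coprime_comm, Nat.Prime.coprime_iff_not_dvd Nat.prime_two]
  intro hdvd
  have h2 : ZMod.castHom (dvd_pow_self 2 hk) (ZMod 2) (u+2*v) = 0 := by
    rw [ZMod.castHom_apply, ← ZMod.natCast_val]
    exact (ZMod.natCast_eq_zero_iff _ _).mpr hdvd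
  rw [h1] at h2
  exact (hu.map (ZMod.castHom (dvd_pow_self 2 hk) (ZMod 2))).ne_zero h2

lemma double_eq' {t : ℕ} {e : ZMod (2^(t+1))} (he : 2 ∣ e.val) :
    2*(ZMod.cast (((e.val/2 : ℕ) : ZMod (2^t))) : ZMod (2^(t+1))) = e := by
  have hlt : e.val/2 < 2^t := by
    have h := lt_of_lt_of_eq (ZMod.val_lt e) (pow_succ 2 t); omega
  rw [← ZMod.natCast_val, ZMod.val_cast_of_lt hlt]
  rw [show (2:ZMod (2^(t+1))) * ((e.val/2 : ℕ):ZMod (2^(t+1))) = ((2*(e.val/2) : ℕ):ZMod (2^(t+1))) by push_cast; ring]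
  rw [show 2*(e.val/2) = e.val by omega, ZMod.natCast_zmod_val]

lemma phi_op (r t : ℕ) (h : t ≤ r) (a b : ZMod (2^(r+1)) × ZMod (2^(t+1)) × ZMod (2^t)) :
    changPhi' r t h (changOp' r t h a b)
      = ((changPhi' r t h a).1 * (changPhi' r t h b).1,
         (changPhi' r t h a).2 * (changPhi' r t h b).2) := by
  obtain ⟨x, y, z⟩ := a; obtain ⟨x', y', z'⟩ := b
  refine Prod.ext ?_ rfl
  simp only [changPhi', changOp']
  have key := two_mul_eq' (pow_dvd_pow 2 (Nat.le_succ t))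
     (a := (ZMod.cast (ZMod.castHom (pow_dvd_pow 2 (by omega : t ≤ r+1)) (ZMod (2^t)) x * z'
        + ZMod.castHom (pow_dvd_pow 2 (by omega : t ≤ r+1)) (ZMod (2^t)) x' * z
        + 2*z*z') : ZMod (2^(t+1))))
     (b := ZMod.castHom (pow_dvd_pow 2 (by omega : t+1 ≤ r+1)) (ZMod (2^(t+1))) x * ZMod.cast z'
        + ZMod.castHom (pow_dvd_pow 2 (by omega : t+1 ≤ r+1)) (ZMod (2^(t+1))) x' * ZMod.cast z
        + 2 * ZMod.cast z * ZMod.cast z') ?_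
  · rw [map_mul]
    linear_combination key
  · rw [sigma_cast']
    simp only [map_add, map_mul, map_ofNat, castHom_castHom', sigma_cast']

noncomputable def chInv (r t : ℕ) (h : t ≤ r)
    (a : ZMod (2^(r+1)) × ZMod (2^(t+1)) × ZMod (2^t)) :
    ZMod (2^(r+1)) × ZMod (2^(t+1)) × ZMod (2^t) :=
  (Ring.inverse a.1,
   -(ZMod.castHom (pow_dvd_pow 2 (by omega : t+1 ≤ r+1)) (ZMod (2^(t+1))) (Ring.inverse a.1) * a.2.1)
     * Ring.inverse (ZMod.castHom (pow_dvd_pow 2 (by omega : t+1 ≤ r+1)) (ZMod (2^(t+1))) a.1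
         + 2*(ZMod.cast a.2.2 : ZMod (2^(t+1)))),
   -(ZMod.castHom (pow_dvd_pow 2 (by omega : t ≤ r+1)) (ZMod (2^t)) (Ring.inverse a.1) * a.2.2)
     * Ring.inverse (ZMod.castHom (pow_dvd_pow 2 (by omega : t ≤ r+1)) (ZMod (2^t)) a.1 + 2*a.2.2))

lemma inv_spec (r t : ℕ) (ht : 1 ≤ t) (h : t ≤ r)
    (a : ZMod (2^(r+1)) × ZMod (2^(t+1)) × ZMod (2^t)) (ha : IsUnit a.1) :
    changOp' r t h a (chInv r t h a) = (1,0,0) ∧ changOp' r t h (chInv r t h a) a = (1,0,0) := by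
  obtain ⟨x, y, z⟩ := a
  simp only at ha
  have hu : IsUnit (ZMod.castHom (pow_dvd_pow 2 (by omega : t+1 ≤ r+1)) (ZMod (2^(t+1))) x
      + 2*(ZMod.cast z : ZMod (2^(t+1)))) :=
    isUnit_add_even' (by omega) _ (ha.map _)
  have hw : IsUnit (ZMod.castHom (pow_dvd_pow 2 (by omega : t ≤ r+1)) (ZMod (2^t)) x + 2*z) :=
    isUnit_add_even' (by omega) _ (ha.map _)
  have hx1 : x * Ring.inverse x = 1 := Ring.mul_inverse_cancel x ha
  have hx2 : Ring.inverse x * x = 1 := Ring.inverse_mul_cancel x ha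
  have hU := Ring.inverse_mul_cancel _ hu
  have hW := Ring.inverse_mul_cancel _ hw
  have part1 : changOp' r t h (x,y,z) (chInv r t h (x,y,z)) = (1,0,0) := by
    refine Prod.ext hx1 (Prod.ext ?_ ?_)
    · simp only [changOp', chInv]
      linear_combination (-(ZMod.castHom (pow_dvd_pow 2 (by omega : t+1 ≤ r+1)) (ZMod (2^(t+1)))
        (Ring.inverse x) * y)) * hU
    · simp only [changOp', chInv]
      linear_combination (-(ZMod.castHom (pow_dvd_pow 2 (by omega : t ≤ r+1)) (ZMod (2^t))
        (Ring.inverse x) * z)) * hW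
  refine ⟨part1, Prod.ext hx2 (Prod.ext ?_ ?_)⟩
  · have hphi := congrArg Prod.fst (phi_op r t h (x,y,z) (chInv r t h (x,y,z)))
    rw [part1] at hphi
    simp only [changPhi', chInv, map_one, ZMod.cast_zero] at hphi
    have h3 : ZMod.castHom (pow_dvd_pow 2 (by omega : t+1 ≤ r+1)) (ZMod (2^(t+1))) x
        * ZMod.castHom (pow_dvd_pow 2 (by omega : t+1 ≤ r+1)) (ZMod (2^(t+1))) (Ring.inverse x)
        = 1 := by
      rw [← map_mul, hx1, map_one]
    simp only [changOp', chInv]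
    linear_combination (-(y * Ring.inverse (ZMod.castHom (pow_dvd_pow 2 (by omega : t+1 ≤ r+1))
        (ZMod (2^(t+1))) x + 2*(ZMod.cast z : ZMod (2^(t+1)))))) * hphi
      - (y * (ZMod.castHom (pow_dvd_pow 2 (by omega : t+1 ≤ r+1)) (ZMod (2^(t+1)))
          (Ring.inverse x)
        + 2*(ZMod.cast (-(ZMod.castHom (pow_dvd_pow 2 (by omega : t ≤ r+1)) (ZMod (2^t))
            (Ring.inverse x) * z)
     * Ring.inverse (ZMod.castHom (pow_dvd_pow 2 (by omega : t ≤ r+1)) (ZMod (2^t)) x + 2*z))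
          : ZMod (2^(t+1))))) * hU
      - (y * Ring.inverse (ZMod.castHom (pow_dvd_pow 2 (by omega : t+1 ≤ r+1))
          (ZMod (2^(t+1))) x + 2*(ZMod.cast z : ZMod (2^(t+1))))) * h3
  · simp only [changOp', chInv]
    linear_combination (-(ZMod.castHom (pow_dvd_pow 2 (by omega : t ≤ r+1)) (ZMod (2^t))
      (Ring.inverse x) * z)) * hW

lemma mem_E_iff (r t : ℕ) (ht : 1 ≤ t) (h : t ≤ r)
    (a : ZMod (2^(r+1)) × ZMod (2^(t+1)) × ZMod (2^t)) :
    a ∈ changE' r t h ↔ IsUnit a.1 := by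
  constructor
  · rintro ⟨b, hb1, -⟩
    exact IsUnit.of_mul_eq_one b.1 (congrArg Prod.fst hb1)
  · intro ha
    exact ⟨chInv r t h a, inv_spec r t ht h a ha⟩

def zOf (r t : ℕ) (h : t ≤ r) (u : ZMod (2^(t+1))) (v : ZMod (2^(r+1))) : ZMod (2^t) :=
  (((u - ZMod.castHom (pow_dvd_pow 2 (by omega : t+1 ≤ r+1)) (ZMod (2^(t+1))) v).val / 2 : ℕ)
    : ZMod (2^t))

lemma phi_section (r t : ℕ) (h : t ≤ r) (u : ZMod (2^(t+1))) (v : ZMod (2^(r+1)))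
    (hu : IsUnit u) (hv : IsUnit v) :
    changPhi' r t h (v, 0, zOf r t h u v) = (u, v) := by
  refine Prod.ext ?_ rfl
  simp only [changPhi', zOf]
  have he : 2 ∣ (u - ZMod.castHom (pow_dvd_pow 2 (by omega : t+1 ≤ r+1)) (ZMod (2^(t+1))) v).val := by
    apply two_dvd_val' (k := t+1) (by omega)
    rw [map_sub]
    have h1 : ZMod.castHom (dvd_pow_self 2 (by omega : t+1 ≠ 0)) (ZMod 2) u = 1 :=
      zmod2_eq_one' (hu.map _)
    have h2 : ZMod.castHom (dvd_pow_self 2 (by omega : t+1 ≠ 0)) (ZMod 2)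
        (ZMod.castHom (pow_dvd_pow 2 (by omega : t+1 ≤ r+1)) (ZMod (2^(t+1))) v) = 1 :=
      zmod2_eq_one' ((hv.map _).map _)
    rw [h1, h2, sub_self]
  linear_combination double_eq' (t := t) he

lemma ker_char (r t : ℕ) (h : t ≤ r) (a : ZMod (2^(r+1)) × ZMod (2^(t+1)) × ZMod (2^t))
    (hphi : changPhi' r t h a = (1, 1)) : a = (1, a.2.1, 0) := by
  have h2 : a.1 = 1 := congrArg Prod.snd hphi
  have h1 := congrArg Prod.fst hphi
  simp only [changPhi', h2, map_one] at h1
  have h3 : 2*(ZMod.cast a.2.2 : ZMod (2^(t+1))) = 2*(ZMod.cast (0 : ZMod (2^t)) : ZMod (2^(t+1))) := by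
    rw [ZMod.cast_zero]
    linear_combination h1
  have h4 : a.2.2 = 0 := mu_inj' h3
  exact Prod.ext h2 (Prod.ext rfl h4)

lemma phi_ker (r t : ℕ) (h : t ≤ r) (y : ZMod (2^(t+1))) :
    changPhi' r t h (1, y, 0) = (1, 1) := by
  refine Prod.ext ?_ rfl
  simp only [changPhi', map_one, ZMod.cast_zero, mul_zero, add_zero]

lemma iter_gen (r t : ℕ) (h : t ≤ r) (n : ℕ) :
    (fun b => changOp' r t h (1,1,0) b)^[n] (1,0,0) = (1, (n : ZMod (2^(t+1))), 0) := by
  induction n with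
  | zero => simp
  | succ n ih =>
      rw [Function.iterate_succ_apply', ih]
      simp only [changOp']
      refine Prod.ext ?_ (Prod.ext ?_ ?_) <;>
        simp only [map_one, ZMod.cast_zero, mul_zero, add_zero, mul_one, one_mul,
          mul_zero, zero_mul, Nat.cast_succ] <;> push_cast <;> ring

lemma H_mul (r t : ℕ) (h : t ≤ r) (a : ZMod (2^(r+1)) × ZMod (2^(t+1)) × ZMod (2^t))
    (ha : a ∈ changH' r t) (b : ZMod (2^(r+1)) × ZMod (2^(t+1)) × ZMod (2^t))
    (hb : b ∈ changH' r t) : changOp' r t h a b ∈ changH' r t := by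
  refine ⟨ha.1.mul hb.1, ?_⟩
  simp only [changOp']
  rw [ha.2, hb.2]
  ring

lemma phi_injH (r t : ℕ) (h : t ≤ r) :
    ∀ a ∈ changH' r t, ∀ b ∈ changH' r t,
      changPhi' r t h a = changPhi' r t h b → a = b := by
  intro a ha b hb heq
  have h2 : a.1 = b.1 := congrArg Prod.snd heq
  have h1 := congrArg Prod.fst heq
  simp only [changPhi'] at h1
  rw [h2] at h1
  have h3 : 2*(ZMod.cast a.2.2 : ZMod (2^(t+1))) = 2*(ZMod.cast b.2.2 : ZMod (2^(t+1))) := by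
    linear_combination h1
  exact Prod.ext h2 (Prod.ext (ha.2.trans hb.2.symm) (mu_inj' h3))

/-- For `r > t ≥ 1`, the map `φ(x,y,z) = (π(x) + μ(z), x)` is a surjective group
homomorphism `E'(r,t) → (ℤ/2^{t+1})ˣ × (ℤ/2^{r+1})ˣ` with kernel
`{(1,y,0) : y ∈ ℤ/2^{t+1}}`, a cyclic subgroup of order `2^{t+1}` generated by
`(1,1,0)`; moreover `H' = {(x,0,z) : x a unit}` is a subgroup of `E'(r,t)` and `φ`
restricts to an isomorphism of `H'` onto `(ℤ/2^{t+1})ˣ × (ℤ/2^{r+1})ˣ`, so the short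
exact sequence `ℤ/2^{t+1} ↪ E'(r,t) ↠ (ℤ/2^{t+1})ˣ × (ℤ/2^{r+1})ˣ` splits. -/
theorem stmt8 (r t : ℕ) (ht : 1 ≤ t) (htr : t < r) :
    -- φ is multiplicative on E'(r,t)
    (∀ a ∈ changE' r t htr.le, ∀ b ∈ changE' r t htr.le,
      changPhi' r t htr.le (changOp' r t htr.le a b)
        = ((changPhi' r t htr.le a).1 * (changPhi' r t htr.le b).1,
           (changPhi' r t htr.le a).2 * (changPhi' r t htr.le b).2)) ∧
    -- φ maps E'(r,t) into the product of unit groups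
    (∀ a ∈ changE' r t htr.le,
      IsUnit (changPhi' r t htr.le a).1 ∧ IsUnit (changPhi' r t htr.le a).2) ∧
    -- φ is surjective onto the product of unit groups
    (∀ u : ZMod (2 ^ (t + 1)), ∀ v : ZMod (2 ^ (r + 1)), IsUnit u → IsUnit v →
      ∃ a ∈ changE' r t htr.le, changPhi' r t htr.le a = (u, v)) ∧
    -- the kernel of φ is exactly {(1, y, 0)}
    (∀ a ∈ changE' r t htr.le,
      (changPhi' r t htr.le a = (1, 1) ↔ ∃ y : ZMod (2 ^ (t + 1)), a = (1, y, 0))) ∧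
    (∀ y : ZMod (2 ^ (t + 1)), (1, y, 0) ∈ changE' r t htr.le) ∧
    -- the kernel has order 2^{t+1}
    Nat.card {a : ZMod (2 ^ (r + 1)) × ZMod (2 ^ (t + 1)) × ZMod (2 ^ t) //
        a ∈ changE' r t htr.le ∧ changPhi' r t htr.le a = (1, 1)} = 2 ^ (t + 1) ∧
    -- the kernel is cyclic, generated by (1,1,0)
    (∀ a ∈ changE' r t htr.le, changPhi' r t htr.le a = (1, 1) →
      ∃ n : ℕ, a = (fun b => changOp' r t htr.le (1, 1, 0) b)^[n] (1, 0, 0)) ∧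
    -- H' is a subgroup of E'(r,t)
    changH' r t ⊆ changE' r t htr.le ∧
    (1, 0, 0) ∈ changH' r t ∧
    (∀ a ∈ changH' r t, ∀ b ∈ changH' r t, changOp' r t htr.le a b ∈ changH' r t) ∧
    (∀ a ∈ changH' r t, ∃ b ∈ changH' r t,
      changOp' r t htr.le a b = (1, 0, 0) ∧ changOp' r t htr.le b a = (1, 0, 0)) ∧
    -- φ restricted to H' is a bijection onto the product of unit groups
    (∀ a ∈ changH' r t, ∀ b ∈ changH' r t,
      changPhi' r t htr.le a = changPhi' r t htr.le b → a = b) ∧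
    (∀ u : ZMod (2 ^ (t + 1)), ∀ v : ZMod (2 ^ (r + 1)), IsUnit u → IsUnit v →
      ∃ a ∈ changH' r t, changPhi' r t htr.le a = (u, v)) ∧
    -- hence φ admits a multiplicative section with values in H': the sequence splits
    (∃ s : ZMod (2 ^ (t + 1)) × ZMod (2 ^ (r + 1)) →
        ZMod (2 ^ (r + 1)) × ZMod (2 ^ (t + 1)) × ZMod (2 ^ t),
      (∀ u : ZMod (2 ^ (t + 1)), ∀ v : ZMod (2 ^ (r + 1)), IsUnit u → IsUnit v →
        s (u, v) ∈ changH' r t ∧ changPhi' r t htr.le (s (u, v)) = (u, v)) ∧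
      (∀ u u' : ZMod (2 ^ (t + 1)), ∀ v v' : ZMod (2 ^ (r + 1)),
        IsUnit u → IsUnit v → IsUnit u' → IsUnit v' →
        s (u * u', v * v') = changOp' r t htr.le (s (u, v)) (s (u', v')))) := by
  refine ⟨fun a _ b _ => phi_op r t htr.le a b, ?_, ?_, ?_, ?_, ?_, ?_, ?_, ?_, ?_, ?_, ?_, ?_, ?_⟩
  · intro a ha
    have hx : IsUnit a.1 := (mem_E_iff r t ht htr.le a).mp ha
    refine ⟨?_, hx⟩
    simp only [changPhi']
    exact isUnit_add_even' (by omega) _ (hx.map _)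
  · intro u v hu hv
    exact ⟨(v, 0, zOf r t htr.le u v), (mem_E_iff r t ht htr.le _).mpr hv,
      phi_section r t htr.le u v hu hv⟩
  · intro a _
    constructor
    · intro hp
      exact ⟨a.2.1, ker_char r t htr.le a hp⟩
    · rintro ⟨y, rfl⟩
      exact phi_ker r t htr.le y
  · intro y
    exact (mem_E_iff r t ht htr.le (1, y, 0)).mpr isUnit_one
  · have e : {a : ZMod (2 ^ (r + 1)) × ZMod (2 ^ (t + 1)) × ZMod (2 ^ t) //
        a ∈ changE' r t htr.le ∧ changPhi' r t htr.le a = (1, 1)} ≃ ZMod (2 ^ (t + 1)) :=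
      { toFun := fun a => a.1.2.1
        invFun := fun y => ⟨(1, y, 0), (mem_E_iff r t ht htr.le _).mpr isUnit_one,
          phi_ker r t htr.le y⟩
        left_inv := fun a => Subtype.ext (ker_char r t htr.le a.1 a.2.2).symm
        right_inv := fun y => rfl }
    rw [Nat.card_congr e, Nat.card_zmod]
  · intro a _ hphi
    refine ⟨a.2.1.val, ?_⟩
    rw [iter_gen r t htr.le, ZMod.natCast_zmod_val]
    exact ker_char r t htr.le a hphi
  · intro a ha
    exact (mem_E_iff r t ht htr.le a).mpr ha.1
  · exact ⟨isUnit_one, rfl⟩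
  · exact fun a ha b hb => H_mul r t htr.le a ha b hb
  · intro a ha
    refine ⟨chInv r t htr.le a, ⟨?_, ?_⟩, inv_spec r t ht htr.le a ha.1⟩
    · exact isUnit_ringInverse.mpr ha.1
    · simp only [chInv]
      rw [ha.2]
      ring
  · exact phi_injH r t htr.le
  · intro u v hu hv
    exact ⟨(v, 0, zOf r t htr.le u v), ⟨hv, rfl⟩, phi_section r t htr.le u v hu hv⟩
  · refine ⟨fun p => (p.2, 0, zOf r t htr.le p.1 p.2), ?_, ?_⟩
    · intro u v hu hv
      exact ⟨⟨hv, rfl⟩, phi_section r t htr.le u v hu hv⟩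
    · intro u u' v v' hu hv hu' hv'
      dsimp only
      have e1 := phi_section r t htr.le u v hu hv
      have e2 := phi_section r t htr.le u' v' hu' hv'
      apply phi_injH r t htr.le _ ⟨hv.mul hv', rfl⟩ _
        (H_mul r t htr.le _ ⟨hv, rfl⟩ _ ⟨hv', rfl⟩)
      rw [phi_section r t htr.le _ _ (hu.mul hu') (hv.mul hv'), phi_op, e1, e2]
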